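/- For the complete undirected graph K_n on n ≥ 1 vertices, the rank of EMH_{k,k}(K_n) equals n!/(n-(k+1))! for every k < n, and EMH_{k,ℓ}(K_n) = 0 for all k ≠ ℓ. -/

import Mathlib

open scoped Classical

/-- Length of a tuple of vertices: sum of consecutive path-metric distances. -/
noncomputable def tlen {V : Type} (G : SimpleGraph V) {k : ℕ} (x : Fin (k + 1) → V) : ℕ :=
  ∑ i : Fin k, G.dist (x i.castSucc) (x i.succ)

/-- Generators of the (k,ℓ) eulerian magnitude chain group: tuples of k+1 pairwise distinct
vertices, consecutive ones at finite distance, of total length ℓ. -/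
def emcGen {V : Type} (G : SimpleGraph V) (k ℓ : ℕ) : Set (Fin (k + 1) → V) :=
  {x | Function.Injective x ∧ (∀ i : Fin k, G.Reachable (x i.castSucc) (x i.succ)) ∧
    tlen G x = ℓ}

/-- The (k,ℓ) eulerian magnitude chain group: free `ℤ`-module on `emcGen G k ℓ`. -/
abbrev EMC {V : Type} (G : SimpleGraph V) (k ℓ : ℕ) : Type :=
  emcGen G k ℓ →₀ ℤ

/-- The `i`-th face: delete the `i`-th vertex if the result is again a generator
(in particular, length is preserved), and `0` otherwise. -/
noncomputable def emcFace {V : Type} (G : SimpleGraph V) (k ℓ : ℕ) (i : Fin (k + 2))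
    (x : emcGen G (k + 1) ℓ) : EMC G k ℓ :=
  if h : ((x : Fin (k + 2) → V) ∘ i.succAbove) ∈ emcGen G k ℓ then
    Finsupp.single ⟨_, h⟩ 1 else 0

/-- The eulerian magnitude differential: alternating sum of interior-vertex deletions. -/
noncomputable def emcD {V : Type} (G : SimpleGraph V) (k ℓ : ℕ) :
    EMC G (k + 1) ℓ →ₗ[ℤ] EMC G k ℓ :=
  Finsupp.lift (EMC G k ℓ) ℤ (emcGen G (k + 1) ℓ) fun x =>
    ∑ i : Fin (k + 2),
      if i = 0 ∨ i = Fin.last (k + 1) then 0 else ((-1 : ℤ) ^ (i : ℕ)) • emcFace G k ℓ i x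

/-- Cycles of the eulerian magnitude chain complex in degree `k`. -/
noncomputable def emcCycles {V : Type} (G : SimpleGraph V) (k ℓ : ℕ) :
    Submodule ℤ (EMC G k ℓ) :=
  match k with
  | 0 => ⊤
  | k + 1 => LinearMap.ker (emcD G k ℓ)

/-- Eulerian magnitude homology in bidegree (k,ℓ): cycles modulo boundaries. -/
noncomputable abbrev EMH {V : Type} (G : SimpleGraph V) (k ℓ : ℕ) :=
  emcCycles G k ℓ ⧸
    Submodule.comap (emcCycles G k ℓ).subtype (LinearMap.range (emcD G k ℓ))

section Aux
variable {n : ℕ}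

lemma mem_emcGen_top_iff {k ℓ : ℕ} (x : Fin (k + 1) → Fin n) :
    x ∈ emcGen (⊤ : SimpleGraph (Fin n)) k ℓ ↔ Function.Injective x ∧ k = ℓ := by
  have hdist : ∀ {m : ℕ} (y : Fin (m + 1) → Fin n), Function.Injective y →
      tlen (⊤ : SimpleGraph (Fin n)) y = m := by
    intro m y hinj
    rw [tlen, Finset.sum_congr rfl (fun i _ => ?_), Finset.sum_const, smul_eq_mul, mul_one,
      Finset.card_univ, Fintype.card_fin]
    exact SimpleGraph.dist_eq_one_iff_adj.mpr (by
      simp only [SimpleGraph.top_adj]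
      exact fun h => (Fin.castSucc_lt_succ : i.castSucc < i.succ).ne (hinj h))
  constructor
  · rintro ⟨hinj, -, hlen⟩
    exact ⟨hinj, by rw [← hlen, hdist x hinj]⟩
  · rintro ⟨hinj, rfl⟩
    refine ⟨hinj, fun i => ?_, hdist x hinj⟩
    by_cases h : x i.castSucc = x i.succ
    · rw [h]
    · exact SimpleGraph.Adj.reachable (by simpa only [SimpleGraph.top_adj] using h)

lemma emcFace_top_eq_zero {k ℓ : ℕ} (i : Fin (k + 2))
    (x : emcGen (⊤ : SimpleGraph (Fin n)) (k + 1) ℓ) :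
    emcFace (⊤ : SimpleGraph (Fin n)) k ℓ i x = 0 := by
  rw [emcFace, dif_neg]
  intro h
  have h1 := (mem_emcGen_top_iff _).mp h
  have h2 := (mem_emcGen_top_iff _).mp x.2
  omega

lemma emcD_top_eq_zero (k ℓ : ℕ) : emcD (⊤ : SimpleGraph (Fin n)) k ℓ = 0 := by
  apply LinearMap.ext
  intro y
  rw [emcD, Finsupp.lift_apply]
  simp [emcFace_top_eq_zero]

lemma emcCycles_top (k ℓ : ℕ) : emcCycles (⊤ : SimpleGraph (Fin n)) k ℓ = ⊤ := by
  cases k with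
  | zero => rfl
  | succ m => rw [emcCycles, emcD_top_eq_zero, LinearMap.ker_zero]

noncomputable def emhEquiv (k ℓ : ℕ) :
    EMH (⊤ : SimpleGraph (Fin n)) k ℓ ≃ₗ[ℤ] EMC (⊤ : SimpleGraph (Fin n)) k ℓ :=
  (Submodule.quotEquivOfEqBot _ (by
      rw [emcD_top_eq_zero, LinearMap.range_zero, Submodule.comap_bot, Submodule.ker_subtype])).trans
    ((LinearEquiv.ofEq _ _ (emcCycles_top k ℓ)).trans Submodule.topEquiv)

end Aux

theorem emh_complete_graph (n : ℕ) (hn : 1 ≤ n) :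
    (∀ k : ℕ, k < n →
      Module.finrank ℤ (EMH (⊤ : SimpleGraph (Fin n)) k k) =
        n.factorial / (n - (k + 1)).factorial) ∧
    (∀ k ℓ : ℕ, k ≠ ℓ → Subsingleton (EMH (⊤ : SimpleGraph (Fin n)) k ℓ)) := by
  constructor
  · intro k hk
    rw [(emhEquiv k k).finrank_eq]
    haveI : Fintype (emcGen (⊤ : SimpleGraph (Fin n)) k k) := Fintype.ofFinite _
    rw [Module.finrank_finsupp_self]
    have e : emcGen (⊤ : SimpleGraph (Fin n)) k k ≃ (Fin (k + 1) ↪ Fin n) :=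
      (Equiv.subtypeEquivRight (fun x => by
        rw [mem_emcGen_top_iff]; simp)).trans
        (Equiv.subtypeInjectiveEquivEmbedding _ _)
    rw [Fintype.card_congr e, Fintype.card_embedding_eq, Fintype.card_fin, Fintype.card_fin,
      Nat.descFactorial_eq_div hk]
  · intro k ℓ hkl
    haveI : IsEmpty (emcGen (⊤ : SimpleGraph (Fin n)) k ℓ) := by
      constructor
      rintro ⟨x, hx⟩
      exact hkl ((mem_emcGen_top_iff x).mp hx).2
    haveI : Subsingleton (EMC (⊤ : SimpleGraph (Fin n)) k ℓ) :=
      ⟨fun a b => Finsupp.ext fun x => isEmptyElim x⟩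
    exact (Submodule.Quotient.mk_surjective _).subsingleton
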